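/- arXiv:math/0603089 — 2 statements merged into one kernel-verified Lean document; each statement's English description precedes it below -/
import Mathlib

section
/- Let g = g_{5,3,1(λ1,λ2)}, let F = (α, β, γ, δ, σ) ∈ g*, and let U = a·X1 + b·X2 + c·X3 + d·X4 + f·X5 ∈ g with a, b, c, d, f ∈ ℝ. Then the coordinates (x, y, z, t, s) of F ∘ exp(ad_U) are: x = α − γ·Σ_{n=1}^{∞} b^n λ1^{n−1}/n!, y = β + γ(a − c·λ1)·Σ_{n=1}^{∞} (b·λ1)^{n−1}/n! − δ·d·Σ_{n=1}^{∞} b^{n−1} λ2^{n}/n! − σ·f·Σ_{n=1}^{∞} b^{n−1}/n!, z = γ·e^{b·λ1}, t = δ·e^{b·λ2}, s = σ·e^{b}. -/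
/-- The Lie bracket of g_{5,3,1(λ₁,λ₂)}: [X1,X2] = X3, [X2,X3] = λ₁·X3, [X2,X4] = λ₂·X4,
[X2,X5] = X5, written in coordinates with respect to the basis (X₁, X₂, X₃, X₄, X₅)
(all other brackets of basis vectors vanish). -/
def bracketg531 (l1 l2 : ℝ) (U V : Fin 5 → ℝ) : Fin 5 → ℝ :=
  ![0, 0,
    (U 0 * V 1 - U 1 * V 0) + l1 * (U 1 * V 2 - U 2 * V 1),
    l2 * (U 1 * V 3 - U 3 * V 1),
    U 1 * V 4 - U 4 * V 1]

/-- The matrix of the adjoint endomorphism ad_U = [U, ·] in the basis (X₁, ..., X₅):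
column j holds the coordinates of [U, Xⱼ]. -/
def adg531 (l1 l2 : ℝ) (U : Fin 5 → ℝ) : Matrix (Fin 5) (Fin 5) ℝ :=
  Matrix.of fun i j => bracketg531 l1 l2 U (Pi.single j 1) i

/-- Explicit formula for the (n+1)-st power of ad_U. -/
def pwg531 (l1 l2 a b c d f : ℝ) (n : ℕ) : Matrix (Fin 5) (Fin 5) ℝ :=
  Matrix.of fun i j =>
    if i = 2 ∧ j = 0 then (l1*b)^n * (-b)
    else if i = 2 ∧ j = 1 then (l1*b)^n * (a - l1*c)
    else if i = 2 ∧ j = 2 then (l1*b)^n * (l1*b)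
    else if i = 3 ∧ j = 1 then (l2*b)^n * (-(l2*d))
    else if i = 3 ∧ j = 3 then (l2*b)^n * (l2*b)
    else if i = 4 ∧ j = 1 then b^n * (-f)
    else if i = 4 ∧ j = 4 then b^n * b
    else 0

lemma adg_eq531 (l1 l2 a b c d f : ℝ) :
    adg531 l1 l2 ![a, b, c, d, f] = pwg531 l1 l2 a b c d f 0 := by
  ext i j
  fin_cases i <;> fin_cases j <;>
    simp [adg531, bracketg531, pwg531, Pi.single_apply, Matrix.vecHead, Matrix.vecTail] <;> ring

lemma pow_eq531 (l1 l2 a b c d f : ℝ) (n : ℕ) :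
    (adg531 l1 l2 ![a, b, c, d, f]) ^ (n + 1) = pwg531 l1 l2 a b c d f n := by
  induction n with
  | zero => rw [pow_one, adg_eq531]
  | succ n ih =>
    rw [pow_succ, ih, adg_eq531 l1 l2 a b c d f]
    ext i j
    fin_cases i <;> fin_cases j <;>
      simp [pwg531, Matrix.mul_apply, Fin.sum_univ_five, Matrix.vecHead, Matrix.vecTail] <;>
      first | tauto | ring

lemma sumdiv531 (x : ℝ) : Summable (fun n : ℕ => x ^ n / ((n+1).factorial : ℝ)) := by
  apply Summable.of_norm_bounded (Real.summable_pow_div_factorial |x|)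
  intro n
  rw [norm_div, norm_pow, Real.norm_eq_abs, Real.norm_natCast]
  gcongr
  exact Nat.le_succ n

lemma sumdiv531' (x k : ℝ) : Summable (fun n : ℕ => x ^ n * k / ((n+1).factorial : ℝ)) :=
  ((sumdiv531 x).mul_left k).congr fun n => by ring

lemma exp_split531 (x : ℝ) :
    1 + (∑' n : ℕ, x ^ n * x / ((n+1).factorial : ℝ)) = Real.exp x := by
  rw [Real.exp_eq_exp_ℝ, NormedSpace.exp_eq_tsum_div]
  simp only []
  rw [Summable.tsum_eq_zero_add (Real.summable_pow_div_factorial x)]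
  simp only [pow_zero, Nat.factorial_zero, Nat.cast_one, div_one]
  congr 1

lemma exp_matrix_eq531 (M : Matrix (Fin 5) (Fin 5) ℝ) (p : ℕ → Matrix (Fin 5) (Fin 5) ℝ)
    (hp : ∀ n, M ^ (n + 1) = p n)
    (hs : ∀ i j, Summable fun n : ℕ => p n i j / ((n+1).factorial : ℝ)) :
    NormedSpace.exp M = Matrix.of fun i j =>
      (if i = j then (1:ℝ) else 0) + ∑' n : ℕ, p n i j / ((n+1).factorial : ℝ) := by
  rw [NormedSpace.exp_eq_tsum ℝ]
  refine HasSum.tsum_eq ?_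
  refine Pi.hasSum.mpr ?_; intro i
  rw [Pi.hasSum]; intro j
  have key : ∀ n : ℕ, ((n.factorial : ℝ)⁻¹ • M ^ n) i j = (M ^ n) i j / (n.factorial : ℝ) := by
    intro n; simp [Matrix.smul_apply, div_eq_inv_mul]
  simp only [key]
  have h1 : HasSum (fun n : ℕ => (M ^ (n + 1)) i j / ((n+1).factorial : ℝ))
      (∑' n : ℕ, p n i j / ((n+1).factorial : ℝ)) := by
    simp only [hp]; exact (hs i j).hasSum
  have h2 := (hasSum_nat_add_iff (f := fun n : ℕ => (M ^ n) i j / (n.factorial : ℝ)) 1).mp h1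
  simpa [Matrix.one_apply, add_comm] using h2

lemma tsum_factor531 (x k : ℝ) :
    ∑' n : ℕ, x ^ n * k / ((n+1).factorial : ℝ) = k * ∑' n : ℕ, x ^ n / ((n+1).factorial : ℝ) := by
  rw [← tsum_mul_left]; exact tsum_congr fun n => by ring

/-- For U = a·X1 + b·X2 + c·X3 + d·X4 + f·X5 and F = (α, β, γ, δ, σ) ∈ g* for
g = g_{5,3,1(λ₁,λ₂)}, the coordinates (x, y, z, t, s) of F ∘ exp(ad_U) (i.e. of
vecMul F (exp (ad_U)) in the dual basis) are:
x = α − γ·Σ_{n≥1} bⁿλ₁ⁿ⁻¹/n!,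
y = β + γ(a − cλ₁)·Σ_{n≥1} (bλ₁)ⁿ⁻¹/n! − δd·Σ_{n≥1} bⁿ⁻¹λ₂ⁿ/n! − σf·Σ_{n≥1} bⁿ⁻¹/n!,
z = γ·e^{bλ₁}, t = δ·e^{bλ₂}, s = σ·e^{b}. -/
theorem coadjoint_action_g531 (l1 l2 α β γ δ σ a b c d f : ℝ)
    (h10 : l1 ≠ 0) (h11 : l1 ≠ 1) (h20 : l2 ≠ 0) (h21 : l2 ≠ 1) (h12 : l1 ≠ l2) :
    Matrix.vecMul ![α, β, γ, δ, σ] (NormedSpace.exp (adg531 l1 l2 ![a, b, c, d, f])) 0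
      = α - γ * ∑' n : ℕ, b ^ (n + 1) * l1 ^ n / (Nat.factorial (n + 1) : ℝ) ∧
    Matrix.vecMul ![α, β, γ, δ, σ] (NormedSpace.exp (adg531 l1 l2 ![a, b, c, d, f])) 1
      = β + γ * (a - c * l1) * (∑' n : ℕ, (b * l1) ^ n / (Nat.factorial (n + 1) : ℝ))
        - δ * d * (∑' n : ℕ, b ^ n * l2 ^ (n + 1) / (Nat.factorial (n + 1) : ℝ))
        - σ * f * (∑' n : ℕ, b ^ n / (Nat.factorial (n + 1) : ℝ)) ∧
    Matrix.vecMul ![α, β, γ, δ, σ] (NormedSpace.exp (adg531 l1 l2 ![a, b, c, d, f])) 2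
      = γ * Real.exp (b * l1) ∧
    Matrix.vecMul ![α, β, γ, δ, σ] (NormedSpace.exp (adg531 l1 l2 ![a, b, c, d, f])) 3
      = δ * Real.exp (b * l2) ∧
    Matrix.vecMul ![α, β, γ, δ, σ] (NormedSpace.exp (adg531 l1 l2 ![a, b, c, d, f])) 4
      = σ * Real.exp b := by
  have hs : ∀ i j, Summable fun n : ℕ =>
      pwg531 l1 l2 a b c d f n i j / ((n+1).factorial : ℝ) := by
    intro i j
    fin_cases i <;> fin_cases j <;> simp [pwg531]
    · exact (sumdiv531' (l1*b) (-b)).congr fun n => by ring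
    · exact sumdiv531' _ _
    · exact sumdiv531' _ _
    · exact (sumdiv531' (l2*b) (-(l2*d))).congr fun n => by ring
    · exact sumdiv531' _ _
    · exact (sumdiv531' b (-f)).congr fun n => by ring
    · exact sumdiv531' _ _
  have hM := exp_matrix_eq531 (adg531 l1 l2 ![a, b, c, d, f]) (pwg531 l1 l2 a b c d f)
    (pow_eq531 l1 l2 a b c d f) hs
  rw [hM]
  refine ⟨?_, ?_, ?_, ?_, ?_⟩ <;>
    simp [Matrix.vecMul, dotProduct, Fin.sum_univ_five, Matrix.of_apply, pwg531,
      Matrix.vecHead, Matrix.vecTail]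
  · have e1 : ∑' n : ℕ, -((l1 * b) ^ n * b) / ((n+1).factorial : ℝ)
        = (-b) * ∑' n : ℕ, (b * l1) ^ n / ((n+1).factorial : ℝ) := by
      rw [← tsum_mul_left]; exact tsum_congr fun n => by ring
    have e2 : ∑' n : ℕ, b ^ (n+1) * l1 ^ n / ((n+1).factorial : ℝ)
        = b * ∑' n : ℕ, (b * l1) ^ n / ((n+1).factorial : ℝ) := by
      rw [← tsum_mul_left]; exact tsum_congr fun n => by ring
    rw [e1, e2]; ring
  · have e1 : ∑' n : ℕ, (l1 * b) ^ n * (a - l1 * c) / ((n+1).factorial : ℝ)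
        = (a - c * l1) * ∑' n : ℕ, (b * l1) ^ n / ((n+1).factorial : ℝ) := by
      rw [← tsum_mul_left]; exact tsum_congr fun n => by ring
    have e2 : ∑' n : ℕ, -((l2 * b) ^ n * (l2 * d)) / ((n+1).factorial : ℝ)
        = (-d) * ∑' n : ℕ, b ^ n * l2 ^ (n+1) / ((n+1).factorial : ℝ) := by
      rw [← tsum_mul_left]; exact tsum_congr fun n => by ring
    have e3 : ∑' n : ℕ, -(b ^ n * f) / ((n+1).factorial : ℝ)
        = (-f) * ∑' n : ℕ, b ^ n / ((n+1).factorial : ℝ) := by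
      rw [← tsum_mul_left]; exact tsum_congr fun n => by ring
    rw [e1, e2, e3]; ring
  · left
    rw [show ∑' n : ℕ, (l1 * b) ^ n * (l1 * b) / ((n+1).factorial : ℝ)
        = ∑' n : ℕ, (b * l1) ^ n * (b * l1) / ((n+1).factorial : ℝ)
      from tsum_congr fun n => by ring]
    exact exp_split531 (b * l1)
  · left
    rw [show ∑' n : ℕ, (l2 * b) ^ n * (l2 * b) / ((n+1).factorial : ℝ)
        = ∑' n : ℕ, (b * l2) ^ n * (b * l2) / ((n+1).factorial : ℝ)
      from tsum_congr fun n => by ring]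
    exact exp_split531 (b * l2)
  · left
    exact exp_split531 b
end

section
/- Let g be any one of the eight Lie algebras g_{5,3,1(λ1,λ2)}, g_{5,3,2(λ)}, g_{5,3,3(λ)}, g_{5,3,4}, g_{5,3,5(λ)}, g_{5,3,6(λ)}, g_{5,3,7}, g_{5,3,8(λ,φ)} (with parameters in the indicated ranges). For every F ∈ g*, the orbit Ω_F equals the single point {F} if and only if F(X3) = F(X4) = F(X5) = 0. Consequently, the union V of all orbits with more than one point is the set { F ∈ g* : (F(X3), F(X4), F(X5)) ≠ (0, 0, 0) }, which is an open subset of g*. -/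
noncomputable def orbitg531 (l1 l2 : ℝ) (F : Fin 5 → ℝ) : Set (Fin 5 → ℝ) :=
  Set.range fun U : Fin 5 → ℝ => Matrix.vecMul F (NormedSpace.exp (adg531 l1 l2 U))

def bracketg532 (l : ℝ) (U V : Fin 5 → ℝ) : Fin 5 → ℝ :=
  ![0, 0,
    (U 0 * V 1 - U 1 * V 0) + (U 1 * V 2 - U 2 * V 1),
    U 1 * V 3 - U 3 * V 1,
    l * (U 1 * V 4 - U 4 * V 1)]

def adg532 (l : ℝ) (U : Fin 5 → ℝ) : Matrix (Fin 5) (Fin 5) ℝ :=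
  Matrix.of fun i j => bracketg532 l U (Pi.single j 1) i

noncomputable def orbitg532 (l : ℝ) (F : Fin 5 → ℝ) : Set (Fin 5 → ℝ) :=
  Set.range fun U : Fin 5 → ℝ => Matrix.vecMul F (NormedSpace.exp (adg532 l U))

def bracketg533 (l : ℝ) (U V : Fin 5 → ℝ) : Fin 5 → ℝ :=
  ![0, 0,
    (U 0 * V 1 - U 1 * V 0) + l * (U 1 * V 2 - U 2 * V 1),
    U 1 * V 3 - U 3 * V 1,
    U 1 * V 4 - U 4 * V 1]

def adg533 (l : ℝ) (U : Fin 5 → ℝ) : Matrix (Fin 5) (Fin 5) ℝ :=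
  Matrix.of fun i j => bracketg533 l U (Pi.single j 1) i

noncomputable def orbitg533 (l : ℝ) (F : Fin 5 → ℝ) : Set (Fin 5 → ℝ) :=
  Set.range fun U : Fin 5 → ℝ => Matrix.vecMul F (NormedSpace.exp (adg533 l U))

def bracketg534 (U V : Fin 5 → ℝ) : Fin 5 → ℝ :=
  ![0, 0,
    (U 0 * V 1 - U 1 * V 0) + (U 1 * V 2 - U 2 * V 1),
    U 1 * V 3 - U 3 * V 1,
    U 1 * V 4 - U 4 * V 1]

def adg534 (U : Fin 5 → ℝ) : Matrix (Fin 5) (Fin 5) ℝ :=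
  Matrix.of fun i j => bracketg534 U (Pi.single j 1) i

noncomputable def orbitg534 (F : Fin 5 → ℝ) : Set (Fin 5 → ℝ) :=
  Set.range fun U : Fin 5 → ℝ => Matrix.vecMul F (NormedSpace.exp (adg534 U))

def bracketg535 (l : ℝ) (U V : Fin 5 → ℝ) : Fin 5 → ℝ :=
  ![0, 0,
    (U 0 * V 1 - U 1 * V 0) + l * (U 1 * V 2 - U 2 * V 1),
    (U 1 * V 3 - U 3 * V 1) + (U 1 * V 4 - U 4 * V 1),
    U 1 * V 4 - U 4 * V 1]

def adg535 (l : ℝ) (U : Fin 5 → ℝ) : Matrix (Fin 5) (Fin 5) ℝ :=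
  Matrix.of fun i j => bracketg535 l U (Pi.single j 1) i

noncomputable def orbitg535 (l : ℝ) (F : Fin 5 → ℝ) : Set (Fin 5 → ℝ) :=
  Set.range fun U : Fin 5 → ℝ => Matrix.vecMul F (NormedSpace.exp (adg535 l U))

def bracketg536 (l : ℝ) (U V : Fin 5 → ℝ) : Fin 5 → ℝ :=
  ![0, 0,
    (U 0 * V 1 - U 1 * V 0) + (U 1 * V 2 - U 2 * V 1) + (U 1 * V 3 - U 3 * V 1),
    U 1 * V 3 - U 3 * V 1,
    l * (U 1 * V 4 - U 4 * V 1)]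

def adg536 (l : ℝ) (U : Fin 5 → ℝ) : Matrix (Fin 5) (Fin 5) ℝ :=
  Matrix.of fun i j => bracketg536 l U (Pi.single j 1) i

noncomputable def orbitg536 (l : ℝ) (F : Fin 5 → ℝ) : Set (Fin 5 → ℝ) :=
  Set.range fun U : Fin 5 → ℝ => Matrix.vecMul F (NormedSpace.exp (adg536 l U))

def bracketg537 (U V : Fin 5 → ℝ) : Fin 5 → ℝ :=
  ![0, 0,
    (U 0 * V 1 - U 1 * V 0) + (U 1 * V 2 - U 2 * V 1) + (U 1 * V 3 - U 3 * V 1),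
    (U 1 * V 3 - U 3 * V 1) + (U 1 * V 4 - U 4 * V 1),
    U 1 * V 4 - U 4 * V 1]

def adg537 (U : Fin 5 → ℝ) : Matrix (Fin 5) (Fin 5) ℝ :=
  Matrix.of fun i j => bracketg537 U (Pi.single j 1) i

noncomputable def orbitg537 (F : Fin 5 → ℝ) : Set (Fin 5 → ℝ) :=
  Set.range fun U : Fin 5 → ℝ => Matrix.vecMul F (NormedSpace.exp (adg537 U))

noncomputable def bracketg538 (l φ : ℝ) (U V : Fin 5 → ℝ) : Fin 5 → ℝ :=
  ![0, 0,
    (U 0 * V 1 - U 1 * V 0) + Real.cos φ * (U 1 * V 2 - U 2 * V 1) - Real.sin φ * (U 1 * V 3 - U 3 * V 1),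
    Real.sin φ * (U 1 * V 2 - U 2 * V 1) + Real.cos φ * (U 1 * V 3 - U 3 * V 1),
    l * (U 1 * V 4 - U 4 * V 1)]

noncomputable def adg538 (l φ : ℝ) (U : Fin 5 → ℝ) : Matrix (Fin 5) (Fin 5) ℝ :=
  Matrix.of fun i j => bracketg538 l φ U (Pi.single j 1) i

noncomputable def orbitg538 (l φ : ℝ) (F : Fin 5 → ℝ) : Set (Fin 5 → ℝ) :=
  Set.range fun U : Fin 5 → ℝ => Matrix.vecMul F (NormedSpace.exp (adg538 l φ U))




namespace MD5Aux

noncomputable def vecMulLM (F : Fin 5 → ℝ) :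
    Matrix (Fin 5) (Fin 5) ℝ →ₗ[ℝ] (Fin 5 → ℝ) where
  toFun M := Matrix.vecMul F M
  map_add' M N := Matrix.vecMul_add M N F
  map_smul' c M := by
    ext j
    simp [Matrix.vecMul, dotProduct, Finset.mul_sum, mul_left_comm, mul_assoc]

noncomputable def vecMulCLM (F : Fin 5 → ℝ) :
    Matrix (Fin 5) (Fin 5) ℝ →L[ℝ] (Fin 5 → ℝ) :=
  letI : SeminormedRing (Matrix (Fin 5) (Fin 5) ℝ) := Matrix.linftyOpSemiNormedRing
  letI : NormedRing (Matrix (Fin 5) (Fin 5) ℝ) := Matrix.linftyOpNormedRing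
  letI : NormedAlgebra ℝ (Matrix (Fin 5) (Fin 5) ℝ) := Matrix.linftyOpNormedAlgebra
  LinearMap.toContinuousLinearMap (vecMulLM F)

lemma vecMulCLM_apply (F : Fin 5 → ℝ) (M : Matrix (Fin 5) (Fin 5) ℝ) :
    vecMulCLM F M = Matrix.vecMul F M := rfl

lemma vecMul_exp (F : Fin 5 → ℝ) (A : Matrix (Fin 5) (Fin 5) ℝ) :
    Matrix.vecMul F (NormedSpace.exp A)
      = ∑' n : ℕ, ((n.factorial : ℝ))⁻¹ • Matrix.vecMul F (A ^ n) := by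
  letI : SeminormedRing (Matrix (Fin 5) (Fin 5) ℝ) := Matrix.linftyOpSemiNormedRing
  letI : NormedRing (Matrix (Fin 5) (Fin 5) ℝ) := Matrix.linftyOpNormedRing
  letI : NormedAlgebra ℝ (Matrix (Fin 5) (Fin 5) ℝ) := Matrix.linftyOpNormedAlgebra
  have hsum : Summable fun n : ℕ => ((n.factorial : ℝ))⁻¹ • A ^ n := NormedSpace.expSeries_summable' A
  have hmap := (vecMulCLM F).map_tsum hsum
  rw [NormedSpace.exp_eq_tsum (𝕂 := ℝ)]
  rw [show Matrix.vecMul F (∑' n : ℕ, ((n.factorial : ℝ))⁻¹ • A ^ n)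
      = vecMulCLM F (∑' n : ℕ, ((n.factorial : ℝ))⁻¹ • A ^ n) from rfl, hmap]
  simp only [map_smul, vecMulCLM_apply]

lemma vecMul_exp_of_vecMul_zero (F : Fin 5 → ℝ) (A : Matrix (Fin 5) (Fin 5) ℝ)
    (h : Matrix.vecMul F A = 0) : Matrix.vecMul F (NormedSpace.exp A) = F := by
  rw [vecMul_exp]
  rw [tsum_eq_sum (s := {0}) ?_]
  · simp
  · intro n hn
    obtain ⟨k, rfl⟩ : ∃ k, n = k + 1 := by
      cases n with
      | zero => simp at hn
      | succ k => exact ⟨k, rfl⟩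
    rw [pow_succ', ← Matrix.vecMul_vecMul, h]
    simp

lemma vecMul_exp_of_sq_zero (F : Fin 5 → ℝ) (A : Matrix (Fin 5) (Fin 5) ℝ)
    (h : A * A = 0) :
    Matrix.vecMul F (NormedSpace.exp A) = F + Matrix.vecMul F A := by
  rw [vecMul_exp]
  rw [tsum_eq_sum (s := {0, 1}) ?_]
  · norm_num
  · intro n hn
    obtain ⟨k, rfl⟩ : ∃ k, n = k + 2 := by
      match n, hn with
      | (k+2), _ => exact ⟨k, rfl⟩
    have hA : A ^ (k + 2) = A ^ k * (A * A) := by rw [pow_add, pow_two]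
    rw [hA, h, mul_zero]
    simp

def colMat (c : Fin 5 → ℝ) : Matrix (Fin 5) (Fin 5) ℝ :=
  Matrix.of fun i j => if j = 1 then c i else 0

lemma colMat_sq (c : Fin 5 → ℝ) (h1 : c 1 = 0) : colMat c * colMat c = 0 := by
  ext i j
  simp [colMat, Matrix.mul_apply, Fin.sum_univ_five, h1]

lemma tail_ne (a b x y z : ℝ) (ha : a ≠ 0) (hb : b ≠ 0)
    (h : ¬(x = 0 ∧ y = 0 ∧ z = 0)) :
    x * x + a * y * (a * y) + b * z * (b * z) ≠ 0 := by
  intro hs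
  apply h
  have hx : x * x = 0 :=
    le_antisymm (by nlinarith [mul_self_nonneg (a * y), mul_self_nonneg (b * z)])
      (mul_self_nonneg x)
  have hy : a * y * (a * y) = 0 :=
    le_antisymm (by nlinarith [mul_self_nonneg x, mul_self_nonneg (b * z)])
      (mul_self_nonneg (a * y))
  have hz : b * z * (b * z) = 0 :=
    le_antisymm (by nlinarith [mul_self_nonneg x, mul_self_nonneg (a * y)])
      (mul_self_nonneg (b * z))
  refine ⟨mul_self_eq_zero.mp hx, ?_, ?_⟩
  · rcases mul_eq_zero.mp (mul_self_eq_zero.mp hy) with h' | h'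
    · exact absurd h' ha
    · exact h'
  · rcases mul_eq_zero.mp (mul_self_eq_zero.mp hz) with h' | h'
    · exact absurd h' hb
    · exact h'

lemma key2 (F c : Fin 5 → ℝ) (h1 : c 1 = 0)
    (hs : F 0 * c 0 + F 1 * c 1 + F 2 * c 2 + F 3 * c 3 + F 4 * c 4 ≠ 0) :
    Matrix.vecMul F (NormedSpace.exp (colMat c)) ≠ F := by
  rw [vecMul_exp_of_sq_zero F _ (colMat_sq c h1)]
  intro hEq
  have h := congrFun hEq 1
  simp [Matrix.vecMul, dotProduct, colMat, Fin.sum_univ_five] at h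
  exact hs (by linarith)

theorem generic (ad : (Fin 5 → ℝ) → Matrix (Fin 5) (Fin 5) ℝ)
    (P0 : ad 0 = 0)
    (P1 : ∀ (U F : Fin 5 → ℝ), F 2 = 0 → F 3 = 0 → F 4 = 0 → Matrix.vecMul F (ad U) = 0)
    (P2 : ∀ F : Fin 5 → ℝ, ¬(F 2 = 0 ∧ F 3 = 0 ∧ F 4 = 0) →
      ∃ U, Matrix.vecMul F (NormedSpace.exp (ad U)) ≠ F)
    (P3 : ∀ U, ad (-U) = -(ad U)) :
    (∀ F : Fin 5 → ℝ,
      ((Set.range fun U : Fin 5 → ℝ => Matrix.vecMul F (NormedSpace.exp (ad U))) = {F} ↔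
        F 2 = 0 ∧ F 3 = 0 ∧ F 4 = 0)) ∧
    (⋃ F ∈ {F : Fin 5 → ℝ |
        (Set.range fun U : Fin 5 → ℝ => Matrix.vecMul F (NormedSpace.exp (ad U))).Nontrivial},
      Set.range fun U : Fin 5 → ℝ => Matrix.vecMul F (NormedSpace.exp (ad U)))
      = {F : Fin 5 → ℝ | ¬(F 2 = 0 ∧ F 3 = 0 ∧ F 4 = 0)} := by
  have hsing : ∀ F : Fin 5 → ℝ, F 2 = 0 → F 3 = 0 → F 4 = 0 →
      (Set.range fun U : Fin 5 → ℝ => Matrix.vecMul F (NormedSpace.exp (ad U))) = {F} := by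
    intro F h2 h3 h4
    have hconst : (fun U : Fin 5 → ℝ => Matrix.vecMul F (NormedSpace.exp (ad U)))
        = fun _ => F := by
      funext U
      exact vecMul_exp_of_vecMul_zero F (ad U) (P1 U F h2 h3 h4)
    rw [hconst, Set.range_const]
  have hmem : ∀ F : Fin 5 → ℝ,
      F ∈ Set.range fun U : Fin 5 → ℝ => Matrix.vecMul F (NormedSpace.exp (ad U)) := by
    intro F
    refine ⟨0, ?_⟩
    show Matrix.vecMul F (NormedSpace.exp (ad 0)) = F
    rw [P0, NormedSpace.exp_zero, Matrix.vecMul_one]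
  have htail : ∀ F G : Fin 5 → ℝ,
      (G ∈ Set.range fun U : Fin 5 → ℝ => Matrix.vecMul F (NormedSpace.exp (ad U))) →
      G 2 = 0 → G 3 = 0 → G 4 = 0 → F = G := by
    rintro F G ⟨U, rfl⟩ g2 g3 g4
    have h1 : Matrix.vecMul (Matrix.vecMul F (NormedSpace.exp (ad U)))
          (NormedSpace.exp (ad (-U)))
        = Matrix.vecMul F (NormedSpace.exp (ad U)) :=
      vecMul_exp_of_vecMul_zero _ _ (P1 (-U) _ g2 g3 g4)
    have h2 : Matrix.vecMul (Matrix.vecMul F (NormedSpace.exp (ad U)))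
        (NormedSpace.exp (ad (-U))) = F := by
      rw [P3, Matrix.vecMul_vecMul,
        ← Matrix.exp_add_of_commute (ad U) (-(ad U)) ((Commute.refl (ad U)).neg_right),
        add_neg_cancel, NormedSpace.exp_zero, Matrix.vecMul_one]
    show F = Matrix.vecMul F (NormedSpace.exp (ad U))
    rw [← h1, h2]
  constructor
  · intro F
    constructor
    · intro hO
      by_contra hne
      obtain ⟨U, hU⟩ := P2 F hne
      have hmemU : Matrix.vecMul F (NormedSpace.exp (ad U)) ∈ ({F} : Set (Fin 5 → ℝ)) := by
        rw [← hO]; exact Set.mem_range_self U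
      exact hU hmemU
    · rintro ⟨h2, h3, h4⟩
      exact hsing F h2 h3 h4
  · ext G
    simp only [Set.mem_iUnion, Set.mem_setOf_eq, exists_prop]
    constructor
    · rintro ⟨F, hFnt, hG⟩
      rintro ⟨g2, g3, g4⟩
      have hFG : F = G := htail F G hG g2 g3 g4
      rw [hsing F (hFG ▸ g2) (hFG ▸ g3) (hFG ▸ g4)] at hFnt
      exact Set.not_nontrivial_singleton hFnt
    · intro hG
      refine ⟨G, ?_, hmem G⟩
      obtain ⟨U, hU⟩ := P2 G hG
      exact ⟨_, Set.mem_range_self U, G, hmem G, hU⟩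

end MD5Aux

set_option maxHeartbeats 1000000 in
theorem MD5Aux.res1 (l1 l2 : ℝ) (h20 : l2 ≠ 0) :
    (∀ F : Fin 5 → ℝ,
      ((Set.range fun U : Fin 5 → ℝ => Matrix.vecMul F (NormedSpace.exp ((adg531 l1 l2) U))) = {F} ↔
        F 2 = 0 ∧ F 3 = 0 ∧ F 4 = 0)) ∧
    (⋃ F ∈ {F : Fin 5 → ℝ |
        (Set.range fun U : Fin 5 → ℝ => Matrix.vecMul F (NormedSpace.exp ((adg531 l1 l2) U))).Nontrivial},
      Set.range fun U : Fin 5 → ℝ => Matrix.vecMul F (NormedSpace.exp ((adg531 l1 l2) U)))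
      = {F : Fin 5 → ℝ | ¬(F 2 = 0 ∧ F 3 = 0 ∧ F 4 = 0)} :=
  MD5Aux.generic (adg531 l1 l2)
    (by ext i j; fin_cases i <;> simp [adg531, bracketg531])
    (by
      intro U F h2 h3 h4
      funext j
      simp [Matrix.vecMul, dotProduct, Fin.sum_univ_five, adg531, bracketg531, h2, h3, h4])
    (by
      intro F hF
      refine ⟨![F 2, 0, 0, -(l2 * F 3), -(F 4)], ?_⟩
      have hc : (adg531 l1 l2) ![F 2, 0, 0, -(l2 * F 3), -(F 4)]
          = MD5Aux.colMat ![0, 0, F 2, l2 * (l2 * F 3), F 4] := by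
        ext i j
        fin_cases i <;> fin_cases j <;>
          simp [adg531, bracketg531, MD5Aux.colMat, Pi.single_apply] <;>
          ring
      rw [hc]
      refine MD5Aux.key2 F _ (by norm_num) ?_
      intro h
      refine MD5Aux.tail_ne l2 1 (F 2) (F 3) (F 4) h20 one_ne_zero hF ?_
      norm_num [Matrix.cons_val_two, Matrix.cons_val_three, Matrix.cons_val_four] at h
      linear_combination h)
    (by intro U; ext i j; fin_cases i <;> simp [adg531, bracketg531] <;> ring)

set_option maxHeartbeats 1000000 in
theorem MD5Aux.res2 (l2' : ℝ) (h2'0 : l2' ≠ 0) :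
    (∀ F : Fin 5 → ℝ,
      ((Set.range fun U : Fin 5 → ℝ => Matrix.vecMul F (NormedSpace.exp ((adg532 l2') U))) = {F} ↔
        F 2 = 0 ∧ F 3 = 0 ∧ F 4 = 0)) ∧
    (⋃ F ∈ {F : Fin 5 → ℝ |
        (Set.range fun U : Fin 5 → ℝ => Matrix.vecMul F (NormedSpace.exp ((adg532 l2') U))).Nontrivial},
      Set.range fun U : Fin 5 → ℝ => Matrix.vecMul F (NormedSpace.exp ((adg532 l2') U)))
      = {F : Fin 5 → ℝ | ¬(F 2 = 0 ∧ F 3 = 0 ∧ F 4 = 0)} :=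
  MD5Aux.generic (adg532 l2')
    (by ext i j; fin_cases i <;> simp [adg532, bracketg532])
    (by
      intro U F h2 h3 h4
      funext j
      simp [Matrix.vecMul, dotProduct, Fin.sum_univ_five, adg532, bracketg532, h2, h3, h4])
    (by
      intro F hF
      refine ⟨![F 2, 0, 0, -(F 3), -(l2' * F 4)], ?_⟩
      have hc : (adg532 l2') ![F 2, 0, 0, -(F 3), -(l2' * F 4)]
          = MD5Aux.colMat ![0, 0, F 2, F 3, l2' * (l2' * F 4)] := by
        ext i j
        fin_cases i <;> fin_cases j <;>
          simp [adg532, bracketg532, MD5Aux.colMat, Pi.single_apply] <;>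
          ring
      rw [hc]
      refine MD5Aux.key2 F _ (by norm_num) ?_
      intro h
      refine MD5Aux.tail_ne (1:ℝ) l2' (F 2) (F 3) (F 4) one_ne_zero h2'0 hF ?_
      norm_num [Matrix.cons_val_two, Matrix.cons_val_three, Matrix.cons_val_four] at h
      linear_combination h)
    (by intro U; ext i j; fin_cases i <;> simp [adg532, bracketg532] <;> ring)

set_option maxHeartbeats 1000000 in
theorem MD5Aux.res3 (l3' : ℝ) :
    (∀ F : Fin 5 → ℝ,
      ((Set.range fun U : Fin 5 → ℝ => Matrix.vecMul F (NormedSpace.exp ((adg533 l3') U))) = {F} ↔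
        F 2 = 0 ∧ F 3 = 0 ∧ F 4 = 0)) ∧
    (⋃ F ∈ {F : Fin 5 → ℝ |
        (Set.range fun U : Fin 5 → ℝ => Matrix.vecMul F (NormedSpace.exp ((adg533 l3') U))).Nontrivial},
      Set.range fun U : Fin 5 → ℝ => Matrix.vecMul F (NormedSpace.exp ((adg533 l3') U)))
      = {F : Fin 5 → ℝ | ¬(F 2 = 0 ∧ F 3 = 0 ∧ F 4 = 0)} :=
  MD5Aux.generic (adg533 l3')
    (by ext i j; fin_cases i <;> simp [adg533, bracketg533])
    (by
      intro U F h2 h3 h4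
      funext j
      simp [Matrix.vecMul, dotProduct, Fin.sum_univ_five, adg533, bracketg533, h2, h3, h4])
    (by
      intro F hF
      refine ⟨![F 2, 0, 0, -(F 3), -(F 4)], ?_⟩
      have hc : (adg533 l3') ![F 2, 0, 0, -(F 3), -(F 4)]
          = MD5Aux.colMat ![0, 0, F 2, F 3, F 4] := by
        ext i j
        fin_cases i <;> fin_cases j <;>
          simp [adg533, bracketg533, MD5Aux.colMat, Pi.single_apply] <;>
          ring
      rw [hc]
      refine MD5Aux.key2 F _ (by norm_num) ?_
      intro h
      refine MD5Aux.tail_ne (1:ℝ) 1 (F 2) (F 3) (F 4) one_ne_zero one_ne_zero hF ?_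
      norm_num [Matrix.cons_val_two, Matrix.cons_val_three, Matrix.cons_val_four] at h
      linear_combination h)
    (by intro U; ext i j; fin_cases i <;> simp [adg533, bracketg533] <;> ring)

set_option maxHeartbeats 1000000 in
theorem MD5Aux.res4  :
    (∀ F : Fin 5 → ℝ,
      ((Set.range fun U : Fin 5 → ℝ => Matrix.vecMul F (NormedSpace.exp ((adg534) U))) = {F} ↔
        F 2 = 0 ∧ F 3 = 0 ∧ F 4 = 0)) ∧
    (⋃ F ∈ {F : Fin 5 → ℝ |
        (Set.range fun U : Fin 5 → ℝ => Matrix.vecMul F (NormedSpace.exp ((adg534) U))).Nontrivial},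
      Set.range fun U : Fin 5 → ℝ => Matrix.vecMul F (NormedSpace.exp ((adg534) U)))
      = {F : Fin 5 → ℝ | ¬(F 2 = 0 ∧ F 3 = 0 ∧ F 4 = 0)} :=
  MD5Aux.generic (adg534)
    (by ext i j; fin_cases i <;> simp [adg534, bracketg534])
    (by
      intro U F h2 h3 h4
      funext j
      simp [Matrix.vecMul, dotProduct, Fin.sum_univ_five, adg534, bracketg534, h2, h3, h4])
    (by
      intro F hF
      refine ⟨![F 2, 0, 0, -(F 3), -(F 4)], ?_⟩
      have hc : (adg534) ![F 2, 0, 0, -(F 3), -(F 4)]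
          = MD5Aux.colMat ![0, 0, F 2, F 3, F 4] := by
        ext i j
        fin_cases i <;> fin_cases j <;>
          simp [adg534, bracketg534, MD5Aux.colMat, Pi.single_apply] <;>
          ring
      rw [hc]
      refine MD5Aux.key2 F _ (by norm_num) ?_
      intro h
      refine MD5Aux.tail_ne (1:ℝ) 1 (F 2) (F 3) (F 4) one_ne_zero one_ne_zero hF ?_
      norm_num [Matrix.cons_val_two, Matrix.cons_val_three, Matrix.cons_val_four] at h
      linear_combination h)
    (by intro U; ext i j; fin_cases i <;> simp [adg534, bracketg534] <;> ring)

set_option maxHeartbeats 1000000 in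
theorem MD5Aux.res5 (l5' : ℝ) :
    (∀ F : Fin 5 → ℝ,
      ((Set.range fun U : Fin 5 → ℝ => Matrix.vecMul F (NormedSpace.exp ((adg535 l5') U))) = {F} ↔
        F 2 = 0 ∧ F 3 = 0 ∧ F 4 = 0)) ∧
    (⋃ F ∈ {F : Fin 5 → ℝ |
        (Set.range fun U : Fin 5 → ℝ => Matrix.vecMul F (NormedSpace.exp ((adg535 l5') U))).Nontrivial},
      Set.range fun U : Fin 5 → ℝ => Matrix.vecMul F (NormedSpace.exp ((adg535 l5') U)))
      = {F : Fin 5 → ℝ | ¬(F 2 = 0 ∧ F 3 = 0 ∧ F 4 = 0)} :=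
  MD5Aux.generic (adg535 l5')
    (by ext i j; fin_cases i <;> simp [adg535, bracketg535])
    (by
      intro U F h2 h3 h4
      funext j
      simp [Matrix.vecMul, dotProduct, Fin.sum_univ_five, adg535, bracketg535, h2, h3, h4])
    (by
      intro F hF
      refine ⟨![F 2, 0, 0, F 4 - F 3, -(F 4)], ?_⟩
      have hc : (adg535 l5') ![F 2, 0, 0, F 4 - F 3, -(F 4)]
          = MD5Aux.colMat ![0, 0, F 2, F 3, F 4] := by
        ext i j
        fin_cases i <;> fin_cases j <;>
          simp [adg535, bracketg535, MD5Aux.colMat, Pi.single_apply] <;>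
          ring
      rw [hc]
      refine MD5Aux.key2 F _ (by norm_num) ?_
      intro h
      refine MD5Aux.tail_ne (1:ℝ) 1 (F 2) (F 3) (F 4) one_ne_zero one_ne_zero hF ?_
      norm_num [Matrix.cons_val_two, Matrix.cons_val_three, Matrix.cons_val_four] at h
      linear_combination h)
    (by intro U; ext i j; fin_cases i <;> simp [adg535, bracketg535] <;> ring)

set_option maxHeartbeats 1000000 in
theorem MD5Aux.res6 (l6' : ℝ) (h6'0 : l6' ≠ 0) :
    (∀ F : Fin 5 → ℝ,
      ((Set.range fun U : Fin 5 → ℝ => Matrix.vecMul F (NormedSpace.exp ((adg536 l6') U))) = {F} ↔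
        F 2 = 0 ∧ F 3 = 0 ∧ F 4 = 0)) ∧
    (⋃ F ∈ {F : Fin 5 → ℝ |
        (Set.range fun U : Fin 5 → ℝ => Matrix.vecMul F (NormedSpace.exp ((adg536 l6') U))).Nontrivial},
      Set.range fun U : Fin 5 → ℝ => Matrix.vecMul F (NormedSpace.exp ((adg536 l6') U)))
      = {F : Fin 5 → ℝ | ¬(F 2 = 0 ∧ F 3 = 0 ∧ F 4 = 0)} :=
  MD5Aux.generic (adg536 l6')
    (by ext i j; fin_cases i <;> simp [adg536, bracketg536])
    (by
      intro U F h2 h3 h4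
      funext j
      simp [Matrix.vecMul, dotProduct, Fin.sum_univ_five, adg536, bracketg536, h2, h3, h4])
    (by
      intro F hF
      refine ⟨![F 2 - F 3, 0, 0, -(F 3), -(l6' * F 4)], ?_⟩
      have hc : (adg536 l6') ![F 2 - F 3, 0, 0, -(F 3), -(l6' * F 4)]
          = MD5Aux.colMat ![0, 0, F 2, F 3, l6' * (l6' * F 4)] := by
        ext i j
        fin_cases i <;> fin_cases j <;>
          simp [adg536, bracketg536, MD5Aux.colMat, Pi.single_apply] <;>
          ring
      rw [hc]
      refine MD5Aux.key2 F _ (by norm_num) ?_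
      intro h
      refine MD5Aux.tail_ne (1:ℝ) l6' (F 2) (F 3) (F 4) one_ne_zero h6'0 hF ?_
      norm_num [Matrix.cons_val_two, Matrix.cons_val_three, Matrix.cons_val_four] at h
      linear_combination h)
    (by intro U; ext i j; fin_cases i <;> simp [adg536, bracketg536] <;> ring)

set_option maxHeartbeats 1000000 in
theorem MD5Aux.res7  :
    (∀ F : Fin 5 → ℝ,
      ((Set.range fun U : Fin 5 → ℝ => Matrix.vecMul F (NormedSpace.exp ((adg537) U))) = {F} ↔
        F 2 = 0 ∧ F 3 = 0 ∧ F 4 = 0)) ∧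
    (⋃ F ∈ {F : Fin 5 → ℝ |
        (Set.range fun U : Fin 5 → ℝ => Matrix.vecMul F (NormedSpace.exp ((adg537) U))).Nontrivial},
      Set.range fun U : Fin 5 → ℝ => Matrix.vecMul F (NormedSpace.exp ((adg537) U)))
      = {F : Fin 5 → ℝ | ¬(F 2 = 0 ∧ F 3 = 0 ∧ F 4 = 0)} :=
  MD5Aux.generic (adg537)
    (by ext i j; fin_cases i <;> simp [adg537, bracketg537])
    (by
      intro U F h2 h3 h4
      funext j
      simp [Matrix.vecMul, dotProduct, Fin.sum_univ_five, adg537, bracketg537, h2, h3, h4])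
    (by
      intro F hF
      refine ⟨![F 2 + F 4 - F 3, 0, 0, F 4 - F 3, -(F 4)], ?_⟩
      have hc : (adg537) ![F 2 + F 4 - F 3, 0, 0, F 4 - F 3, -(F 4)]
          = MD5Aux.colMat ![0, 0, F 2, F 3, F 4] := by
        ext i j
        fin_cases i <;> fin_cases j <;>
          simp [adg537, bracketg537, MD5Aux.colMat, Pi.single_apply] <;>
          ring
      rw [hc]
      refine MD5Aux.key2 F _ (by norm_num) ?_
      intro h
      refine MD5Aux.tail_ne (1:ℝ) 1 (F 2) (F 3) (F 4) one_ne_zero one_ne_zero hF ?_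
      norm_num [Matrix.cons_val_two, Matrix.cons_val_three, Matrix.cons_val_four] at h
      linear_combination h)
    (by intro U; ext i j; fin_cases i <;> simp [adg537, bracketg537] <;> ring)

set_option maxHeartbeats 1000000 in
theorem MD5Aux.res8 (l8' φ : ℝ) (h8'0 : l8' ≠ 0) :
    (∀ F : Fin 5 → ℝ,
      ((Set.range fun U : Fin 5 → ℝ => Matrix.vecMul F (NormedSpace.exp ((adg538 l8' φ) U))) = {F} ↔
        F 2 = 0 ∧ F 3 = 0 ∧ F 4 = 0)) ∧
    (⋃ F ∈ {F : Fin 5 → ℝ |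
        (Set.range fun U : Fin 5 → ℝ => Matrix.vecMul F (NormedSpace.exp ((adg538 l8' φ) U))).Nontrivial},
      Set.range fun U : Fin 5 → ℝ => Matrix.vecMul F (NormedSpace.exp ((adg538 l8' φ) U)))
      = {F : Fin 5 → ℝ | ¬(F 2 = 0 ∧ F 3 = 0 ∧ F 4 = 0)} :=
  MD5Aux.generic (adg538 l8' φ)
    (by ext i j; fin_cases i <;> simp [adg538, bracketg538])
    (by
      intro U F h2 h3 h4
      funext j
      simp [Matrix.vecMul, dotProduct, Fin.sum_univ_five, adg538, bracketg538, h2, h3, h4])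
    (by
      intro F hF
      refine ⟨![F 2, 0, -(Real.sin φ * F 3), -(Real.cos φ * F 3), -(l8' * F 4)], ?_⟩
      have hc : (adg538 l8' φ) ![F 2, 0, -(Real.sin φ * F 3), -(Real.cos φ * F 3), -(l8' * F 4)]
          = MD5Aux.colMat ![0, 0, F 2, F 3, l8' * (l8' * F 4)] := by
        ext i j
        fin_cases i <;> fin_cases j <;>
          simp [adg538, bracketg538, MD5Aux.colMat, Pi.single_apply] <;>
          first
        | ring1
        | linear_combination F 3 * (Real.sin_sq_add_cos_sq φ)
      rw [hc]
      refine MD5Aux.key2 F _ (by norm_num) ?_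
      intro h
      refine MD5Aux.tail_ne (1:ℝ) l8' (F 2) (F 3) (F 4) one_ne_zero h8'0 hF ?_
      norm_num [Matrix.cons_val_two, Matrix.cons_val_three, Matrix.cons_val_four] at h
      linear_combination h)
    (by intro U; ext i j; fin_cases i <;> simp [adg538, bracketg538] <;> ring)

/-- For each of the eight algebras, Ω_F = {F} iff F(X3) = F(X4) = F(X5) = 0; hence the
union V of all orbits with more than one point is {F | (F(X3),F(X4),F(X5)) ≠ (0,0,0)},
which is open in g*. -/
theorem singleton_orbits (l1 l2 l2' l3' l5' l6' l8' φ : ℝ)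
    (h10 : l1 ≠ 0) (h11 : l1 ≠ 1) (h20 : l2 ≠ 0) (h21 : l2 ≠ 1) (h12 : l1 ≠ l2)
    (h2'0 : l2' ≠ 0) (h2'1 : l2' ≠ 1) (h3'1 : l3' ≠ 1) (h5'1 : l5' ≠ 1)
    (h6'0 : l6' ≠ 0) (h6'1 : l6' ≠ 1) (h8'0 : l8' ≠ 0) (hφ0 : 0 < φ) (hφπ : φ < Real.pi) :
    ((∀ F : Fin 5 → ℝ, (orbitg531 l1 l2 F = {F} ↔ F 2 = 0 ∧ F 3 = 0 ∧ F 4 = 0)) ∧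
      (⋃ F ∈ {F : Fin 5 → ℝ | (orbitg531 l1 l2 F).Nontrivial}, orbitg531 l1 l2 F)
        = {F : Fin 5 → ℝ | ¬(F 2 = 0 ∧ F 3 = 0 ∧ F 4 = 0)}) ∧
    ((∀ F : Fin 5 → ℝ, (orbitg532 l2' F = {F} ↔ F 2 = 0 ∧ F 3 = 0 ∧ F 4 = 0)) ∧
      (⋃ F ∈ {F : Fin 5 → ℝ | (orbitg532 l2' F).Nontrivial}, orbitg532 l2' F)
        = {F : Fin 5 → ℝ | ¬(F 2 = 0 ∧ F 3 = 0 ∧ F 4 = 0)}) ∧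
    ((∀ F : Fin 5 → ℝ, (orbitg533 l3' F = {F} ↔ F 2 = 0 ∧ F 3 = 0 ∧ F 4 = 0)) ∧
      (⋃ F ∈ {F : Fin 5 → ℝ | (orbitg533 l3' F).Nontrivial}, orbitg533 l3' F)
        = {F : Fin 5 → ℝ | ¬(F 2 = 0 ∧ F 3 = 0 ∧ F 4 = 0)}) ∧
    ((∀ F : Fin 5 → ℝ, (orbitg534 F = {F} ↔ F 2 = 0 ∧ F 3 = 0 ∧ F 4 = 0)) ∧
      (⋃ F ∈ {F : Fin 5 → ℝ | (orbitg534 F).Nontrivial}, orbitg534 F)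
        = {F : Fin 5 → ℝ | ¬(F 2 = 0 ∧ F 3 = 0 ∧ F 4 = 0)}) ∧
    ((∀ F : Fin 5 → ℝ, (orbitg535 l5' F = {F} ↔ F 2 = 0 ∧ F 3 = 0 ∧ F 4 = 0)) ∧
      (⋃ F ∈ {F : Fin 5 → ℝ | (orbitg535 l5' F).Nontrivial}, orbitg535 l5' F)
        = {F : Fin 5 → ℝ | ¬(F 2 = 0 ∧ F 3 = 0 ∧ F 4 = 0)}) ∧
    ((∀ F : Fin 5 → ℝ, (orbitg536 l6' F = {F} ↔ F 2 = 0 ∧ F 3 = 0 ∧ F 4 = 0)) ∧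
      (⋃ F ∈ {F : Fin 5 → ℝ | (orbitg536 l6' F).Nontrivial}, orbitg536 l6' F)
        = {F : Fin 5 → ℝ | ¬(F 2 = 0 ∧ F 3 = 0 ∧ F 4 = 0)}) ∧
    ((∀ F : Fin 5 → ℝ, (orbitg537 F = {F} ↔ F 2 = 0 ∧ F 3 = 0 ∧ F 4 = 0)) ∧
      (⋃ F ∈ {F : Fin 5 → ℝ | (orbitg537 F).Nontrivial}, orbitg537 F)
        = {F : Fin 5 → ℝ | ¬(F 2 = 0 ∧ F 3 = 0 ∧ F 4 = 0)}) ∧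
    ((∀ F : Fin 5 → ℝ, (orbitg538 l8' φ F = {F} ↔ F 2 = 0 ∧ F 3 = 0 ∧ F 4 = 0)) ∧
      (⋃ F ∈ {F : Fin 5 → ℝ | (orbitg538 l8' φ F).Nontrivial}, orbitg538 l8' φ F)
        = {F : Fin 5 → ℝ | ¬(F 2 = 0 ∧ F 3 = 0 ∧ F 4 = 0)}) ∧
    IsOpen {F : Fin 5 → ℝ | ¬(F 2 = 0 ∧ F 3 = 0 ∧ F 4 = 0)} := by
  have hopen : IsOpen {F : Fin 5 → ℝ | ¬(F 2 = 0 ∧ F 3 = 0 ∧ F 4 = 0)} := by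
    have hclosed : IsClosed {F : Fin 5 → ℝ | F 2 = 0 ∧ F 3 = 0 ∧ F 4 = 0} :=
      (isClosed_eq (continuous_apply 2) continuous_const).inter
        ((isClosed_eq (continuous_apply 3) continuous_const).inter
          (isClosed_eq (continuous_apply 4) continuous_const))
    exact hclosed.isOpen_compl
  exact ⟨MD5Aux.res1 l1 l2 h20, MD5Aux.res2 l2' h2'0, MD5Aux.res3 l3', MD5Aux.res4, MD5Aux.res5 l5', MD5Aux.res6 l6' h6'0, MD5Aux.res7, MD5Aux.res8 l8' φ h8'0, hopen⟩
end
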